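/- arXiv:2210.04821 — 3 statements merged into one kernel-verified Lean document; each statement's English description precedes it below -/
import Mathlib

section
/- The sum of Euler's totient function satisfies \(\sum_{j=1}^n \phi(j) = \frac{3n^2}{\pi^2} + O(n \log n)\). -/
open Finset ArithmeticFunction Real
open scoped ArithmeticFunction.Moebius

private noncomputable def gmu : ℕ → ℝ := fun d => (μ d : ℝ) / (d : ℝ) ^ 2

private lemma gmu_abs_le (d : ℕ) : |gmu d| ≤ ((d : ℝ) ^ 2)⁻¹ := by
  rw [gmu, abs_div, abs_of_nonneg (by positivity : (0:ℝ) ≤ (d:ℝ)^2), div_eq_mul_inv]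
  have : |(μ d : ℝ)| ≤ 1 := by
    have := abs_moebius_le_one (n := d)
    exact_mod_cast (by exact_mod_cast this : |(μ d : ℤ)| ≤ 1)
  nlinarith [inv_nonneg.mpr (by positivity : (0:ℝ) ≤ (d:ℝ)^2), this, abs_nonneg ((μ d : ℝ))]

private lemma summable_gmu : Summable gmu := by
  apply Summable.of_abs
  apply Summable.of_nonneg_of_le (fun d => abs_nonneg _) gmu_abs_le
  simpa using Real.summable_one_div_nat_pow.mpr (by norm_num : (1:ℕ) < 2)

private lemma tsum_gmu : ∑' d, gmu d = 6 / π ^ 2 := by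
  have h2 : (1 : ℝ) < (2 : ℂ).re := by norm_num
  have hz : LSeries (fun n => (μ n : ℂ)) 2 = ((π : ℂ) ^ 2 / 6)⁻¹ := by
    have hmul := ArithmeticFunction.LSeries_zeta_mul_Lseries_moebius h2
    rw [ArithmeticFunction.LSeries_zeta_eq_riemannZeta h2, riemannZeta_two] at hmul
    have hpi : (π : ℂ) ^ 2 ≠ 0 := by
      simpa using Complex.ofReal_ne_zero.mpr Real.pi_ne_zero
    field_simp at hmul ⊢
    linear_combination hmul
  have hterm : ∀ n : ℕ, LSeries.term (fun n => (μ n : ℂ)) 2 n = ((gmu n : ℝ) : ℂ) := by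
    intro n
    rcases eq_or_ne n 0 with rfl | hn
    · simp [LSeries.term, gmu]
    · rw [LSeries.term_of_ne_zero hn, gmu,
        show (2 : ℂ) = ((2 : ℕ) : ℂ) by norm_num, Complex.cpow_natCast]
      push_cast
      ring
  have heq : LSeries (fun n => (μ n : ℂ)) 2 = ((∑' d, gmu d : ℝ) : ℂ) := by
    rw [LSeries, Complex.ofReal_tsum]
    exact tsum_congr hterm
  rw [heq] at hz
  have : ((∑' d, gmu d : ℝ) : ℂ) = ((6 / π ^ 2 : ℝ) : ℂ) := by
    rw [hz]; push_cast; rw [inv_div]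
  exact_mod_cast this

private lemma tail_sq_le (n : ℕ) (hn : 1 ≤ n) :
    ∑' i : ℕ, (((i + (n + 1) : ℕ) : ℝ) ^ 2)⁻¹ ≤ ((n : ℝ))⁻¹ := by
  apply Real.tsum_le_of_sum_range_le (fun i => by positivity)
  intro N
  have : ∑ i ∈ range N, (((i + (n + 1) : ℕ) : ℝ) ^ 2)⁻¹
      = ∑ j ∈ Ioc n (n + N), ((j : ℝ) ^ 2)⁻¹ := by
    rw [show Ioc n (n + N) = Ico (n + 1) (n + N + 1) by ext x; simp,
      Finset.sum_Ico_eq_sum_range, show n + N + 1 - (n + 1) = N by omega]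
    apply Finset.sum_congr rfl
    intro i _
    congr 1
    push_cast
    ring
  rw [this]
  have h := sum_Ioc_inv_sq_le_sub (α := ℝ) (k := n) (n := n + N) (by omega) (by omega)
  have hN : (0:ℝ) ≤ ((n + N : ℕ) : ℝ)⁻¹ := by positivity
  linarith

private lemma gmu_partial (n : ℕ) (hn : 1 ≤ n) :
    |(∑ d ∈ Icc 1 n, gmu d) - 6 / π ^ 2| ≤ ((n : ℝ))⁻¹ := by
  have h0 : gmu 0 = 0 := by simp [gmu]
  have hIcc : ∑ d ∈ Icc 1 n, gmu d = ∑ d ∈ range (n + 1), gmu d := by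
    rw [show (Icc 1 n : Finset ℕ) = (range (n+1)).erase 0 by ext x; simp; omega]
    exact Finset.sum_erase _ h0
  have hsplit := Summable.sum_add_tsum_nat_add (f := gmu) (n + 1) summable_gmu
  rw [hIcc, ← tsum_gmu, ← hsplit,
    show (∑ i ∈ range (n+1), gmu i) - ((∑ i ∈ range (n+1), gmu i) + ∑' i, gmu (i + (n+1)))
      = -(∑' i, gmu (i + (n+1))) by ring, abs_neg]
  have hsum : Summable fun i => gmu (i + (n + 1)) :=
    (summable_nat_add_iff (n+1)).mpr summable_gmu
  have hsum2 : Summable fun i : ℕ => (((i + (n + 1) : ℕ) : ℝ) ^ 2)⁻¹ := by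
    have : Summable fun i : ℕ => ((i : ℝ) ^ 2)⁻¹ := by
      simpa using Real.summable_one_div_nat_pow.mpr (by norm_num : (1:ℕ) < 2)
    simpa using (summable_nat_add_iff (n+1)).mpr this
  calc |∑' i, gmu (i + (n+1))| ≤ ∑' i, |gmu (i + (n+1))| := by
          have h := norm_tsum_le_tsum_norm (f := fun i => gmu (i + (n+1)))
            (by simpa [Real.norm_eq_abs] using hsum.abs)
          simpa [Real.norm_eq_abs] using h
       _ ≤ ∑' i : ℕ, (((i + (n + 1) : ℕ) : ℝ) ^ 2)⁻¹ := by
          apply Summable.tsum_le_tsum (fun i => by exact_mod_cast gmu_abs_le (i + (n+1))) hsum.abs hsum2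
       _ ≤ ((n : ℝ))⁻¹ := tail_sq_le n hn

private lemma phi_eq_sum (j : ℕ) (hj : 0 < j) :
    (Nat.totient j : ℝ) = ∑ x ∈ j.divisorsAntidiagonal, (μ x.1 : ℝ) * (x.2 : ℝ) := by
  have h := (ArithmeticFunction.sum_eq_iff_sum_mul_moebius_eq (R := ℝ)
      (f := fun j => (Nat.totient j : ℝ)) (g := fun j => (j : ℝ))).mp ?_ j hj
  · exact h.symm
  · intro n hn
    rw [← Nat.cast_sum]
    exact_mod_cast congrArg (Nat.cast (R := ℝ)) (Nat.sum_totient n)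

private lemma swap_sum (n : ℕ) (f : ℕ × ℕ → ℝ) :
    ∑ j ∈ Icc 1 n, ∑ p ∈ j.divisorsAntidiagonal, f p
      = ∑ d ∈ Icc 1 n, ∑ m ∈ Icc 1 (n / d), f (d, m) := by
  have hdisj : ((Icc 1 n : Finset ℕ) : Set ℕ).PairwiseDisjoint
      (fun j => j.divisorsAntidiagonal) := by
    intro a _ b _ hab
    simp only [Finset.disjoint_left]
    intro p hpa hpb
    rw [Nat.mem_divisorsAntidiagonal] at hpa hpb
    exact hab (hpa.1.symm.trans hpb.1)
  rw [← Finset.sum_biUnion hdisj]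
  apply Finset.sum_finset_product
  intro p
  simp only [Finset.mem_biUnion, Nat.mem_divisorsAntidiagonal, Finset.mem_Icc]
  constructor
  · rintro ⟨j, ⟨hj1, hjn⟩, rfl, hj0⟩
    have h0 : p.1 ≠ 0 ∧ p.2 ≠ 0 := by
      constructor <;> rintro h <;> simp [h] at hj0
    refine ⟨⟨by omega, le_trans (Nat.le_mul_of_pos_right _ (by omega)) hjn⟩,
      by omega, (Nat.le_div_iff_mul_le (by omega)).mpr (by rw [mul_comm]; exact hjn)⟩
  · rintro ⟨⟨h1, h1n⟩, h2, h2n⟩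
    have hle : p.1 * p.2 ≤ n := by
      have := (Nat.le_div_iff_mul_le (show 0 < p.1 by omega)).mp h2n
      rw [mul_comm] at this; exact this
    exact ⟨p.1 * p.2, ⟨Nat.one_le_iff_ne_zero.mpr (by positivity), hle⟩, rfl, by positivity⟩

private lemma gauss_sum (q : ℕ) : ∑ m ∈ Icc 1 q, (m : ℝ) = q * (q + 1) / 2 := by
  induction q with
  | zero => simp
  | succ k ih =>
      rw [Finset.sum_Icc_succ_top (by omega)]
      push_cast
      rw [ih]
      ring

private lemma inner_bound (n d : ℕ) (hd : 1 ≤ d) (hdn : d ≤ n) :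
    |(∑ m ∈ Icc 1 (n / d), (m : ℝ)) - ((n : ℝ) / d) ^ 2 / 2| ≤ (n : ℝ) / d := by
  have hd0 : (0:ℝ) < (d:ℝ) := by exact_mod_cast (by omega : 0 < d)
  have h1 : ((n / d : ℕ) : ℝ) ≤ (n : ℝ) / d := by
    rw [le_div_iff₀ hd0]
    exact_mod_cast Nat.div_mul_le_self n d
  have h2 : (n : ℝ) / d < ((n / d : ℕ) : ℝ) + 1 := by
    rw [div_lt_iff₀ hd0, add_mul, one_mul]
    exact_mod_cast (by
      have := Nat.div_add_mod' n d
      have := Nat.mod_lt n (show 0 < d by omega)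
      omega : n < n / d * d + d)
  have hq0 : (0:ℝ) ≤ ((n / d : ℕ) : ℝ) := by positivity
  rw [gauss_sum, abs_le]
  constructor <;> nlinarith [h1, h2, hq0]

private lemma harmonic_bound (n : ℕ) :
    ∑ d ∈ Icc 1 n, ((d : ℝ))⁻¹ ≤ 1 + Real.log n := by
  have h := harmonic_le_one_add_log n
  have : ((harmonic n : ℚ) : ℝ) = ∑ d ∈ Icc 1 n, ((d : ℝ))⁻¹ := by
    rw [harmonic_eq_sum_Icc]
    push_cast
    rfl
  linarith [this ▸ h]

theorem totient_sum_asymptotic :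
    ∃ C : ℝ, 0 < C ∧ ∀ n : ℕ, 2 ≤ n →
      |(∑ j ∈ Finset.Icc 1 n, (Nat.totient j : ℝ)) - 3 * (n : ℝ) ^ 2 / Real.pi ^ 2|
        ≤ C * (n : ℝ) * Real.log n := by
  refine ⟨4, by norm_num, fun n hn => ?_⟩
  have hn1 : 1 ≤ n := by omega
  have hnR : (0:ℝ) < (n : ℝ) := by exact_mod_cast (by omega : 0 < n)
  -- step 1 : rewrite the sum
  have step1 : (∑ j ∈ Icc 1 n, (Nat.totient j : ℝ))
      = ∑ d ∈ Icc 1 n, (μ d : ℝ) * (∑ m ∈ Icc 1 (n / d), (m : ℝ)) := by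
    rw [Finset.sum_congr rfl (fun j hj => phi_eq_sum j (by
        rw [Finset.mem_Icc] at hj; omega)),
      swap_sum n (fun p => (μ p.1 : ℝ) * (p.2 : ℝ))]
    exact Finset.sum_congr rfl fun d _ => by rw [Finset.mul_sum]
  -- the main term
  set A : ℝ := ∑ d ∈ Icc 1 n, gmu d with hA
  have hmainA : ∑ d ∈ Icc 1 n, (μ d : ℝ) * (((n : ℝ) / d) ^ 2 / 2)
      = (n : ℝ) ^ 2 / 2 * A := by
    rw [hA, Finset.mul_sum]
    apply Finset.sum_congr rfl
    intro d hd
    rw [Finset.mem_Icc] at hd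
    have hd0 : ((d:ℝ)) ≠ 0 := by
      exact_mod_cast (by omega : d ≠ 0)
    rw [gmu]
    field_simp
  -- error 1
  have err1 : |(∑ j ∈ Icc 1 n, (Nat.totient j : ℝ)) - (n : ℝ) ^ 2 / 2 * A|
      ≤ (n : ℝ) * (1 + Real.log n) := by
    rw [step1, ← hmainA, ← Finset.sum_sub_distrib]
    calc |∑ d ∈ Icc 1 n, ((μ d : ℝ) * (∑ m ∈ Icc 1 (n / d), (m : ℝ))
            - (μ d : ℝ) * (((n : ℝ) / d) ^ 2 / 2))|
        ≤ ∑ d ∈ Icc 1 n, |(μ d : ℝ) * ((∑ m ∈ Icc 1 (n / d), (m : ℝ))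
            - ((n : ℝ) / d) ^ 2 / 2)| := by
          refine (Finset.abs_sum_le_sum_abs _ _).trans_eq ?_
          apply Finset.sum_congr rfl
          intro d _
          congr 1
          ring
      _ ≤ ∑ d ∈ Icc 1 n, (n : ℝ) / d := by
          apply Finset.sum_le_sum
          intro d hd
          rw [Finset.mem_Icc] at hd
          rw [abs_mul]
          have hmu : |(μ d : ℝ)| ≤ 1 := by
            have := abs_moebius_le_one (n := d)
            exact_mod_cast (by exact_mod_cast this : |(μ d : ℤ)| ≤ 1)
          have hib := inner_bound n d hd.1 hd.2
          have habs : (0:ℝ) ≤ |(∑ m ∈ Icc 1 (n / d), (m : ℝ)) - ((n : ℝ) / d) ^ 2 / 2| :=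
            abs_nonneg _
          nlinarith [abs_nonneg ((μ d : ℝ))]
      _ = (n : ℝ) * ∑ d ∈ Icc 1 n, ((d : ℝ))⁻¹ := by
          rw [Finset.mul_sum]
          exact Finset.sum_congr rfl fun d _ => by rw [div_eq_mul_inv]
      _ ≤ (n : ℝ) * (1 + Real.log n) := by
          have := harmonic_bound n
          nlinarith [hnR.le]
  -- error 2
  have err2 : |(n : ℝ) ^ 2 / 2 * A - 3 * (n : ℝ) ^ 2 / π ^ 2| ≤ (n : ℝ) / 2 := by
    have hp := gmu_partial n hn1
    have : (n : ℝ) ^ 2 / 2 * A - 3 * (n : ℝ) ^ 2 / π ^ 2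
        = (n : ℝ) ^ 2 / 2 * (A - 6 / π ^ 2) := by ring
    rw [this, abs_mul, abs_of_nonneg (by positivity : (0:ℝ) ≤ (n : ℝ) ^ 2 / 2)]
    calc (n : ℝ) ^ 2 / 2 * |A - 6 / π ^ 2| ≤ (n : ℝ) ^ 2 / 2 * ((n : ℝ))⁻¹ := by
          apply mul_le_mul_of_nonneg_left hp (by positivity)
      _ = (n : ℝ) / 2 := by field_simp
  -- combine
  have hlog2 : Real.log 2 ≤ Real.log n :=
    Real.log_le_log (by norm_num) (by exact_mod_cast hn)
  have hlog2' : (0.6931471803 : ℝ) < Real.log 2 := Real.log_two_gt_d9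
  calc |(∑ j ∈ Icc 1 n, (Nat.totient j : ℝ)) - 3 * (n : ℝ) ^ 2 / π ^ 2|
      ≤ |(∑ j ∈ Icc 1 n, (Nat.totient j : ℝ)) - (n : ℝ) ^ 2 / 2 * A|
        + |(n : ℝ) ^ 2 / 2 * A - 3 * (n : ℝ) ^ 2 / π ^ 2| := abs_sub_le _ _ _
    _ ≤ (n : ℝ) * (1 + Real.log n) + (n : ℝ) / 2 := add_le_add err1 err2
    _ ≤ 4 * (n : ℝ) * Real.log n := by nlinarith [hnR, hlog2, hlog2']
end

section
/- The sum \(\sum_{j=1}^{n} \frac{\phi(j)}{j} = \frac{6n}{\pi^2} + O(\sqrt{n})\). -/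
open ArithmeticFunction Finset
open scoped ArithmeticFunction.Moebius

lemma moebius_tsum_real : ∑' d : ℕ, (μ d : ℝ) / (d : ℝ) ^ 2 = 6 / Real.pi ^ 2 := by
  have h2 : (1 : ℝ) < (2 : ℂ).re := by norm_num
  have hmul := LSeries_zeta_mul_Lseries_moebius (s := 2) h2
  have hz := LSeries_zeta_eq_riemannZeta h2
  rw [hz, riemannZeta_two] at hmul
  have hterm : ∀ n : ℕ, LSeries.term (fun n => ((μ n : ℤ) : ℂ)) 2 n
      = ((( μ n : ℝ) / (n : ℝ) ^ 2 : ℝ) : ℂ) := by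
    intro n
    rcases eq_or_ne n 0 with rfl | hn
    · simp [LSeries.term]
    · rw [LSeries.term_of_ne_zero hn]
      rw [show (2 : ℂ) = ((2 : ℕ) : ℂ) by norm_num, Complex.cpow_natCast]
      push_cast
      ring
  have hL : LSeries (fun n => ((μ n : ℤ) : ℂ)) 2
      = ((∑' d : ℕ, (μ d : ℝ) / (d : ℝ) ^ 2 : ℝ) : ℂ) := by
    rw [LSeries, Complex.ofReal_tsum]
    exact tsum_congr hterm
  rw [hL] at hmul
  set S : ℝ := ∑' d : ℕ, (μ d : ℝ) / (d : ℝ) ^ 2 with hS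
  have hπ : (Real.pi : ℝ) ≠ 0 := Real.pi_ne_zero
  have h' : ((Real.pi ^ 2 / 6 * S : ℝ) : ℂ) = ((1 : ℝ) : ℂ) := by
    rw [Complex.ofReal_mul, Complex.ofReal_div, Complex.ofReal_pow, Complex.ofReal_one,
      Complex.ofReal_ofNat]
    exact hmul
  have h'' := Complex.ofReal_injective h'
  field_simp at h'' ⊢
  linarith [h'']

lemma totient_div_eq (j : ℕ) (hj : 1 ≤ j) :
    (Nat.totient j : ℝ) / j = ∑ d ∈ j.divisors, (μ d : ℝ) / d := by
  have hinv := (sum_eq_iff_sum_smul_moebius_eq (R := ℝ)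
      (f := fun n => (Nat.totient n : ℝ)) (g := fun n => (n : ℝ))).mp
    (fun n hn => by rw [← Nat.cast_sum]; exact_mod_cast Nat.sum_totient n) j hj
  rw [← hinv]
  rw [Finset.sum_div]
  rw [← Nat.sum_divisorsAntidiagonal (fun d e => (μ d : ℝ) / d)]
  refine Finset.sum_congr rfl fun x hx => ?_
  obtain ⟨hmul, hj0⟩ := Nat.mem_divisorsAntidiagonal.mp hx
  have h1 : x.1 ≠ 0 := by intro h; rw [h, zero_mul] at hmul; exact hj0 hmul.symm
  have h2 : x.2 ≠ 0 := by intro h; rw [h, mul_zero] at hmul; exact hj0 hmul.symm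
  have hx1 : (x.1 : ℝ) ≠ 0 := Nat.cast_ne_zero.mpr h1
  have hx2 : (x.2 : ℝ) ≠ 0 := Nat.cast_ne_zero.mpr h2
  have hjr : (j : ℝ) = x.1 * x.2 := by exact_mod_cast hmul.symm
  rw [zsmul_eq_mul, hjr]
  field_simp

lemma sum_identity (n : ℕ) :
    ∑ j ∈ Finset.Icc 1 n, (Nat.totient j : ℝ) / j
      = ∑ d ∈ Finset.Icc 1 n, (μ d : ℝ) / d * (n / d : ℕ) := by
  have hdiv : ∀ j ∈ Finset.Icc 1 n, (j : ℕ).divisors = (Finset.Icc 1 n).filter (· ∣ j) := by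
    intro j hj
    obtain ⟨h1, h2⟩ := Finset.mem_Icc.mp hj
    ext d
    simp only [Nat.mem_divisors, Finset.mem_filter, Finset.mem_Icc]
    constructor
    · rintro ⟨hd, -⟩
      exact ⟨⟨Nat.pos_of_dvd_of_pos hd h1, le_trans (Nat.le_of_dvd h1 hd) h2⟩, hd⟩
    · rintro ⟨-, hd⟩
      exact ⟨hd, by omega⟩
  calc ∑ j ∈ Finset.Icc 1 n, (Nat.totient j : ℝ) / j
      = ∑ j ∈ Finset.Icc 1 n, ∑ d ∈ (Finset.Icc 1 n).filter (· ∣ j), (μ d : ℝ) / d := by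
        refine Finset.sum_congr rfl fun j hj => ?_
        rw [totient_div_eq j (Finset.mem_Icc.mp hj).1, hdiv j hj]
    _ = ∑ d ∈ Finset.Icc 1 n, ∑ j ∈ (Finset.Icc 1 n).filter (d ∣ ·), (μ d : ℝ) / d := by
        simp only [Finset.sum_filter]
        exact Finset.sum_comm
    _ = ∑ d ∈ Finset.Icc 1 n, (μ d : ℝ) / d * (n / d : ℕ) := by
        refine Finset.sum_congr rfl fun d hd => ?_
        rw [Finset.sum_const, nsmul_eq_mul, mul_comm]
        congr 1
        rw [show Finset.Icc 1 n = Finset.Ioc 0 n by rfl]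
        exact_mod_cast congrArg (Nat.cast : ℕ → ℝ) (Nat.Ioc_filter_dvd_card_eq_div n d)

lemma sqrt_sum_bound : ∀ n : ℕ, ∑ d ∈ Finset.Icc 1 n, (d : ℝ)⁻¹ ≤ 2 * Real.sqrt n := by
  intro n
  induction n with
  | zero => simp
  | succ n ih =>
    rw [← Finset.Ico_add_one_right_eq_Icc] at ih ⊢
    rw [Finset.sum_Ico_succ_top (by omega)]
    have hb : (0:ℝ) < Real.sqrt ((n:ℝ)+1) := Real.sqrt_pos.mpr (by positivity)
    have ha : (0:ℝ) ≤ Real.sqrt n := Real.sqrt_nonneg n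
    have ha2 : Real.sqrt n ^ 2 = n := Real.sq_sqrt (by positivity)
    have hb2 : Real.sqrt ((n:ℝ)+1) ^ 2 = (n:ℝ)+1 := Real.sq_sqrt (by positivity)
    have hb1 : 1 ≤ Real.sqrt ((n:ℝ)+1) := by nlinarith
    have hstep : ((n:ℝ)+1)⁻¹ ≤ (Real.sqrt ((n:ℝ)+1))⁻¹ := by
      apply inv_anti₀ hb
      nlinarith
    have hib : (Real.sqrt ((n:ℝ)+1))⁻¹ * Real.sqrt ((n:ℝ)+1) = 1 := inv_mul_cancel₀ hb.ne'
    have key : 2 * Real.sqrt n + (Real.sqrt ((n:ℝ)+1))⁻¹ ≤ 2 * Real.sqrt ((n:ℝ)+1) := by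
      nlinarith [sq_nonneg (Real.sqrt n - Real.sqrt ((n:ℝ)+1)),
        inv_nonneg.mpr hb.le]
    push_cast
    exact le_trans (add_le_add ih hstep) key

lemma tail_bound (n : ℕ) (f : ℕ → ℝ) (hf : ∀ d, |f d| ≤ ((d:ℝ)^2)⁻¹)
    (hsum : Summable f) :
    |∑' d : ℕ, f (d + (n+1))| ≤ 2 / ((n:ℝ)+1) := by
  have hshift : Summable (fun d => f (d + (n+1))) := (summable_nat_add_iff (n+1)).mpr hsum
  calc |∑' d : ℕ, f (d + (n+1))| ≤ ∑' d : ℕ, |f (d + (n+1))| := by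
        simpa [Real.norm_eq_abs] using norm_tsum_le_tsum_norm (f := fun d => f (d + (n+1)))
          (by simpa [Real.norm_eq_abs] using hshift.abs)
    _ ≤ 2 / ((n:ℝ)+1) := by
        apply Summable.tsum_le_of_sum_le hshift.abs
        intro s
        obtain ⟨m, hm⟩ : ∃ m, s ⊆ Finset.range m := ⟨s.sup _root_.id + 1, fun x hx =>
          Finset.mem_range.mpr (Nat.lt_succ_of_le (Finset.le_sup (f := _root_.id) hx))⟩
        calc ∑ d ∈ s, |f (d + (n+1))| ≤ ∑ d ∈ Finset.range m, |f (d + (n+1))| :=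
              Finset.sum_le_sum_of_subset_of_nonneg hm (fun i _ _ => abs_nonneg _)
          _ ≤ ∑ d ∈ Finset.range m, (((d + (n+1) : ℕ) :ℝ)^2)⁻¹ :=
              Finset.sum_le_sum fun i _ => hf _
          _ = ∑ i ∈ Finset.Ico (n+1) (n+1+m), ((i:ℝ)^2)⁻¹ := by
              rw [Finset.sum_Ico_eq_sum_range]
              simp only [Nat.add_sub_cancel_left]
              exact Finset.sum_congr rfl fun i _ => by rw [add_comm]
          _ ≤ 2 / ((n:ℝ)+1) := by
              have hsub : Finset.Ico (n+1) (n+1+m) ⊆ Finset.Ioo n (n+1+m) := by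
                intro x hx; simp only [Finset.mem_Ico, Finset.mem_Ioo] at *; omega
              have h := sum_Ioo_inv_sq_le (α := ℝ) n (n+1+m)
              calc ∑ i ∈ Finset.Ico (n+1) (n+1+m), ((i:ℝ)^2)⁻¹
                  ≤ ∑ i ∈ Finset.Ioo n (n+1+m), ((i:ℝ)^2)⁻¹ :=
                    Finset.sum_le_sum_of_subset_of_nonneg hsub (fun i _ _ => by positivity)
                _ ≤ 2 / ((n:ℝ)+1) := by linarith

lemma moebius_abs_le (d : ℕ) : |(μ d : ℝ) / (d : ℝ) ^ 2| ≤ ((d:ℝ)^2)⁻¹ := by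
  rcases eq_or_ne d 0 with rfl | hd
  · simp
  · rw [abs_div, abs_pow, Nat.abs_cast, div_eq_mul_inv]
    have h1 : |(μ d : ℝ)| ≤ 1 := by exact_mod_cast abs_moebius_le_one (n := d)
    calc |(μ d : ℝ)| * ((d:ℝ)^2)⁻¹ ≤ 1 * ((d:ℝ)^2)⁻¹ :=
          mul_le_mul_of_nonneg_right h1 (by positivity)
      _ = ((d:ℝ)^2)⁻¹ := one_mul _

lemma moebius_summable_aux : Summable (fun d : ℕ => (μ d : ℝ) / (d : ℝ) ^ 2) := by
  apply Summable.of_abs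
  exact Summable.of_nonneg_of_le (fun d => abs_nonneg _) moebius_abs_le
    ((Real.summable_nat_pow_inv).mpr one_lt_two)

theorem totient_over_j_sum_asymptotic :
    ∃ C : ℝ, 0 < C ∧ ∀ n : ℕ, 1 ≤ n →
      |(∑ j ∈ Finset.Icc 1 n, (Nat.totient j : ℝ) / (j : ℝ)) - 6 * (n : ℝ) / Real.pi ^ 2|
        ≤ C * Real.sqrt n := by
  refine ⟨4, by norm_num, fun n hn => ?_⟩
  have hsqrt1 : 1 ≤ Real.sqrt n := by
    rw [show (1:ℝ) = Real.sqrt 1 by simp]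
    exact Real.sqrt_le_sqrt (by exact_mod_cast hn)
  set f : ℕ → ℝ := fun d => (μ d : ℝ) / (d : ℝ) ^ 2 with hf
  have hsplit := Summable.sum_add_tsum_nat_add (f := f) (n+1) moebius_summable_aux
  have hrange : ∑ d ∈ Finset.range (n+1), f d = ∑ d ∈ Finset.Icc 1 n, f d := by
    rw [Finset.range_eq_Ico, Finset.sum_eq_sum_Ico_succ_bot (by omega)]
    simp [hf, Finset.Ico_add_one_right_eq_Icc]
  set R : ℝ := ∑' d : ℕ, f (d + (n+1)) with hR
  have hT : ∑ d ∈ Finset.Icc 1 n, f d + R = 6 / Real.pi ^ 2 := by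
    rw [← hrange, hsplit, moebius_tsum_real]
  have hRbound : |R| ≤ 2 / ((n:ℝ)+1) := tail_bound n f moebius_abs_le moebius_summable_aux
  rw [sum_identity n]
  have hπ : (0:ℝ) < Real.pi ^ 2 := by positivity
  have h6 : 6 * (n:ℝ) / Real.pi ^ 2 = (n:ℝ) * (∑ d ∈ Finset.Icc 1 n, f d) + (n:ℝ) * R := by
    rw [← mul_add, hT]; ring
  rw [h6, Finset.mul_sum]
  have hmain : |∑ d ∈ Finset.Icc 1 n, ((μ d : ℝ) / d * ((n / d : ℕ) : ℝ))
      - ∑ d ∈ Finset.Icc 1 n, (n:ℝ) * f d| ≤ 2 * Real.sqrt n := by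
    rw [← Finset.sum_sub_distrib]
    calc |∑ d ∈ Finset.Icc 1 n, ((μ d : ℝ) / d * ((n / d : ℕ) : ℝ) - (n:ℝ) * f d)|
        ≤ ∑ d ∈ Finset.Icc 1 n, |(μ d : ℝ) / d * ((n / d : ℕ) : ℝ) - (n:ℝ) * f d| :=
          Finset.abs_sum_le_sum_abs _ _
      _ ≤ ∑ d ∈ Finset.Icc 1 n, (d : ℝ)⁻¹ := by
          refine Finset.sum_le_sum fun d hd => ?_
          obtain ⟨hd1, hd2⟩ := Finset.mem_Icc.mp hd
          have hd0 : (0:ℝ) < d := by exact_mod_cast hd1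
          have hμ : |(μ d : ℝ)| ≤ 1 := by exact_mod_cast abs_moebius_le_one (n := d)
          have hfloor1 : ((n / d : ℕ) : ℝ) * d ≤ n := by
            exact_mod_cast Nat.div_mul_le_self n d
          have hfloor2 : (n : ℝ) < ((n / d : ℕ) : ℝ) * d + d := by
            have h1 : d * (n/d) + n % d = n := Nat.div_add_mod n d
            have h2 : n % d < d := Nat.mod_lt n (by omega)
            exact_mod_cast (show n < (n/d)*d + d by rw [Nat.mul_comm]; omega)
          have heq : (μ d : ℝ) / d * ((n / d : ℕ) : ℝ) - (n:ℝ) * f d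
              = (μ d : ℝ) / d * (((n / d : ℕ) : ℝ) - (n:ℝ)/d) := by
            simp only [hf]
            field_simp
          rw [heq, abs_mul, abs_div, Nat.abs_cast]
          have hnd : (n:ℝ)/d*d = n := div_mul_cancel₀ _ hd0.ne'
          have habs : |((n / d : ℕ) : ℝ) - (n:ℝ)/d| ≤ 1 := by
            rw [abs_le]
            constructor
            · nlinarith
            · nlinarith
          calc |(μ d : ℝ)| / d * |((n / d : ℕ) : ℝ) - (n:ℝ)/d|
              ≤ 1 / d * 1 := by
                apply mul_le_mul _ habs (abs_nonneg _) (by positivity)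
                exact div_le_div_of_nonneg_right hμ hd0.le
            _ = (d : ℝ)⁻¹ := by rw [mul_one, one_div]
      _ ≤ 2 * Real.sqrt n := sqrt_sum_bound n
  have hnR : |(n:ℝ) * R| ≤ 2 * Real.sqrt n := by
    rw [abs_mul, Nat.abs_cast]
    calc (n:ℝ) * |R| ≤ (n:ℝ) * (2 / ((n:ℝ)+1)) := by
          apply mul_le_mul_of_nonneg_left hRbound (by positivity)
      _ ≤ 2 := by
          rw [mul_div_assoc']
          rw [div_le_iff₀ (by positivity)]
          linarith
      _ ≤ 2 * Real.sqrt n := by linarith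
  calc |∑ d ∈ Finset.Icc 1 n, ((μ d : ℝ) / d * ((n / d : ℕ) : ℝ))
      - (∑ d ∈ Finset.Icc 1 n, (n:ℝ) * f d + (n:ℝ) * R)|
      ≤ |∑ d ∈ Finset.Icc 1 n, ((μ d : ℝ) / d * ((n / d : ℕ) : ℝ))
        - ∑ d ∈ Finset.Icc 1 n, (n:ℝ) * f d| + |(n:ℝ) * R| := by
          rw [sub_add_eq_sub_sub]
          exact abs_sub _ _
    _ ≤ 2 * Real.sqrt n + 2 * Real.sqrt n := add_le_add hmain hnR
    _ = 4 * Real.sqrt n := by ring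
end

section
/- For integers \(1 < m \le n\), the count \(\phi_m(n)\) of integers in \(\{1,\ldots,m\}\) coprime to \(n\) satisfies \(\left|\phi_m(n) - \frac{m}{n}\phi(n)\right| \le 2^{w(n)-1}\), where \(w(n)\) is the number of distinct prime divisors of \(n\). -/
namespace PhiMN
open Finset ArithmeticFunction
open scoped ArithmeticFunction.Moebius ArithmeticFunction.zeta

lemma moebius_sum_indicator (x : ℕ) : ∑ i ∈ x.divisors, μ i = if x = 1 then 1 else 0 := by
  have h : (μ * ζ : ArithmeticFunction ℤ) x = (1 : ArithmeticFunction ℤ) x := by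
    rw [moebius_mul_coe_zeta]
  rw [coe_mul_zeta_apply, one_apply] at h
  exact h

lemma count_coprime_eq (m n : ℕ) (hn : 0 < n) :
    (((Finset.Icc 1 m).filter (fun a => Nat.Coprime a n)).card : ℤ) =
      ∑ d ∈ n.divisors, μ d * (m / d : ℕ) := by
  have h1 : Finset.Icc 1 m = Finset.Ioc 0 m := by rw [← Finset.Icc_add_one_left_eq_Ioc, zero_add]
  rw [h1, Finset.card_filter]
  push_cast
  have h2 : ∀ a ∈ Finset.Ioc 0 m,
      (if Nat.Coprime a n then (1:ℤ) else 0) =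
        ∑ d ∈ n.divisors, if d ∣ a then μ d else 0 := by
    intro a ha
    have ha0 : 0 < a := (Finset.mem_Ioc.mp ha).1
    have hg : Nat.gcd a n ≠ 0 := Nat.gcd_ne_zero_left ha0.ne'
    have hdiv : (Nat.gcd a n).divisors = n.divisors.filter (· ∣ a) := by
      ext d
      simp only [Nat.mem_divisors, Finset.mem_filter, Nat.dvd_gcd_iff]
      constructor
      · rintro ⟨⟨hda, hdn⟩, -⟩; exact ⟨⟨hdn, hn.ne'⟩, hda⟩
      · rintro ⟨⟨hdn, -⟩, hda⟩; exact ⟨⟨hda, hdn⟩, hg⟩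
    have := moebius_sum_indicator (Nat.gcd a n)
    rw [hdiv, Finset.sum_filter] at this
    rw [← this]
  rw [Finset.sum_congr rfl h2, Finset.sum_comm]
  refine Finset.sum_congr rfl fun d hd => ?_
  rw [← Finset.sum_filter, Finset.sum_const, Nat.Ioc_filter_dvd_card_eq_div, nsmul_eq_mul,
    mul_comm]
  norm_cast

lemma totient_eq_sum (n : ℕ) (hn : 0 < n) :
    (Nat.totient n : ℤ) = ∑ d ∈ n.divisors, μ d * (n / d : ℕ) := by
  have h : ∀ k : ℕ, k > 0 → ∑ i ∈ k.divisors, (Nat.totient i : ℤ) = (k : ℤ) := by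
    intro k hk
    exact_mod_cast congrArg (Nat.cast : ℕ → ℤ) (Nat.sum_totient k)
  have h2 := (sum_eq_iff_sum_mul_moebius_eq (f := fun x => (Nat.totient x : ℤ))
      (g := fun x => (x : ℤ))).mp h n hn
  rw [← h2]
  rw [← Nat.sum_divisorsAntidiagonal (f := fun a b => (μ a : ℤ) * (b : ℤ))]
  push_cast
  rfl

lemma card_squarefree_divisors (n : ℕ) (hn : n ≠ 0) :
    (n.divisors.filter Squarefree).card = 2 ^ n.primeFactors.card := by
  have h := Nat.sum_divisors_filter_squarefree hn (f := fun _ => (1 : ℕ))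
  simp only [Finset.sum_const, smul_eq_mul, mul_one] at h
  have h2 : (UniqueFactorizationMonoid.normalizedFactors n).toFinset = n.primeFactors := by
    rw [Nat.factors_eq]; simp
  rw [h2] at h
  simpa [Finset.card_powerset] using h
lemma card_mu_signs (n : ℕ) (hn : 1 < n) :
    (n.divisors.filter (fun d => μ d = 1)).card = 2 ^ (n.primeFactors.card - 1) ∧
    (n.divisors.filter (fun d => μ d = -1)).card = 2 ^ (n.primeFactors.card - 1) := by
  set P := n.divisors.filter (fun d => μ d = 1) with hP
  set N := n.divisors.filter (fun d => μ d = -1) with hN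
  have heq : P.card = N.card := by
    have h0 : ∑ i ∈ n.divisors, μ i = 0 := by
      rw [moebius_sum_indicator, if_neg (by omega)]
    have h1 : ∑ i ∈ n.divisors, μ i
        = ∑ i ∈ n.divisors, ((if μ i = 1 then (1:ℤ) else 0) - (if μ i = -1 then 1 else 0)) := by
      refine Finset.sum_congr rfl fun d _ => ?_
      rcases moebius_eq_or d with h | h | h <;> simp [h]
    rw [h1, Finset.sum_sub_distrib, Finset.sum_boole, Finset.sum_boole] at h0
    have := sub_eq_zero.mp h0
    exact_mod_cast this
  have hsum : P.card + N.card = 2 ^ n.primeFactors.card := by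
    rw [← card_squarefree_divisors n (by omega)]
    rw [Finset.card_filter, Finset.card_filter, Finset.card_filter, ← Finset.sum_add_distrib]
    refine Finset.sum_congr rfl fun d _ => ?_
    rcases moebius_eq_or d with h | h | h
    · have hsq : ¬ Squarefree d := fun hs => moebius_ne_zero_iff_squarefree.mpr hs h
      simp [h, hsq]
    · rw [if_pos (moebius_ne_zero_iff_squarefree.mp (by simp [h]))]
      simp [h]
    · rw [if_pos (moebius_ne_zero_iff_squarefree.mp (by simp [h]))]
      simp [h]
  have hw : 1 ≤ n.primeFactors.card :=
    Finset.card_pos.mpr (Nat.nonempty_primeFactors.mpr hn)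
  have hpow : 2 ^ n.primeFactors.card = 2 * 2 ^ (n.primeFactors.card - 1) := by
    rw [← pow_succ']
    congr 1
    omega
  constructor <;> omega

end PhiMN

open Finset ArithmeticFunction ArithmeticFunction.Moebius PhiMN in
theorem phi_m_n_estimate :
    ∀ m n : ℕ, 1 < m → m ≤ n →
      |(((Finset.Icc 1 m).filter (fun a => Nat.Coprime a n)).card : ℝ)
        - (m : ℝ) / (n : ℝ) * (Nat.totient n : ℝ)|
        ≤ 2 ^ (n.primeFactors.card - 1) := by
  intro m n hm hmn
  have hn : 0 < n := by omega
  have hn1 : 1 < n := by omega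
  have hnR : (n : ℝ) ≠ 0 := by positivity
  have hc : (((Finset.Icc 1 m).filter (fun a => Nat.Coprime a n)).card : ℝ)
      = ∑ d ∈ n.divisors, (μ d : ℝ) * ((m / d : ℕ) : ℝ) := by
    have h2 := congrArg (fun z : ℤ => (z : ℝ)) (count_coprime_eq m n hn)
    push_cast at h2
    exact h2
  have ht : (Nat.totient n : ℝ) = ∑ d ∈ n.divisors, (μ d : ℝ) * ((n / d : ℕ) : ℝ) := by
    have h2 := congrArg (fun z : ℤ => (z : ℝ)) (totient_eq_sum n hn)
    push_cast at h2
    exact h2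
  have key : (((Finset.Icc 1 m).filter (fun a => Nat.Coprime a n)).card : ℝ)
      - (m : ℝ) / (n : ℝ) * (Nat.totient n : ℝ)
      = ∑ d ∈ n.divisors, (μ d : ℝ) * (((m / d : ℕ) : ℝ) - (m : ℝ) / (d : ℝ)) := by
    rw [hc, ht, Finset.mul_sum, ← Finset.sum_sub_distrib]
    refine Finset.sum_congr rfl fun d hd => ?_
    have hdvd : d ∣ n := Nat.dvd_of_mem_divisors hd
    have hd0 : (d : ℝ) ≠ 0 := Nat.cast_ne_zero.mpr (Nat.pos_of_mem_divisors hd).ne'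
    rw [Nat.cast_div hdvd hd0]
    field_simp
  rw [key]
  have he0 : ∀ d ∈ n.divisors, ((m / d : ℕ) : ℝ) ≤ (m : ℝ) / (d : ℝ) :=
    fun d _ => Nat.cast_div_le
  have he1 : ∀ d ∈ n.divisors, (m : ℝ) / (d : ℝ) - ((m / d : ℕ) : ℝ) ≤ 1 := by
    intro d hd
    have hdpos : 0 < d := Nat.pos_of_mem_divisors hd
    have hdR : (0 : ℝ) < d := by exact_mod_cast hdpos
    have h := Nat.lt_mul_div_succ m hdpos
    have hR : (m : ℝ) < d * ((m / d : ℕ) + 1) := by exact_mod_cast h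
    rw [sub_le_iff_le_add]
    have := (div_lt_iff₀ hdR).mpr (by linarith [hR] : (m : ℝ) < ((m / d : ℕ) + 1) * d)
    linarith
  obtain ⟨hPc, hNc⟩ := card_mu_signs n hn1
  rw [abs_le]
  constructor
  · have step1 : ∑ d ∈ n.divisors,
        (if μ d = 1 then -((m : ℝ) / d - ((m / d : ℕ) : ℝ)) else 0)
        ≤ ∑ d ∈ n.divisors, (μ d : ℝ) * (((m / d : ℕ) : ℝ) - (m : ℝ) / (d : ℝ)) := by
      refine Finset.sum_le_sum fun d hd => ?_
      rcases moebius_eq_or d with h | h | h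
      · simp [h]
      · rw [if_pos h, h]
        push_cast
        ring_nf
        exact le_rfl
      · rw [if_neg (by rw [h]; decide), h]
        push_cast
        linarith [he0 d hd]
    have step2 : -(2 ^ (n.primeFactors.card - 1) : ℝ)
        ≤ ∑ d ∈ n.divisors,
          (if μ d = 1 then -((m : ℝ) / d - ((m / d : ℕ) : ℝ)) else 0) := by
      rw [← Finset.sum_filter]
      have hle : ∑ d ∈ n.divisors.filter (fun d => μ d = 1), (-1 : ℝ)
          ≤ ∑ d ∈ n.divisors.filter (fun d => μ d = 1),
            -((m : ℝ) / d - ((m / d : ℕ) : ℝ)) := by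
        refine Finset.sum_le_sum fun d hd => ?_
        have := he1 d (Finset.mem_filter.mp hd).1
        linarith
      have hval : ∑ d ∈ n.divisors.filter (fun d => μ d = 1), (-1 : ℝ)
          = -(2 ^ (n.primeFactors.card - 1) : ℝ) := by
        rw [Finset.sum_const, hPc]
        ring
      linarith
    linarith
  · have step1 : ∑ d ∈ n.divisors, (μ d : ℝ) * (((m / d : ℕ) : ℝ) - (m : ℝ) / (d : ℝ))
        ≤ ∑ d ∈ n.divisors,
          (if μ d = -1 then ((m : ℝ) / d - ((m / d : ℕ) : ℝ)) else 0) := by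
      refine Finset.sum_le_sum fun d hd => ?_
      rcases moebius_eq_or d with h | h | h
      · simp [h]
      · rw [if_neg (by rw [h]; decide), h]
        push_cast
        linarith [he0 d hd]
      · rw [if_pos h, h]
        push_cast
        ring_nf
        exact le_rfl
    have step2 : ∑ d ∈ n.divisors,
        (if μ d = -1 then ((m : ℝ) / d - ((m / d : ℕ) : ℝ)) else 0)
        ≤ (2 ^ (n.primeFactors.card - 1) : ℝ) := by
      rw [← Finset.sum_filter]
      have hle : ∑ d ∈ n.divisors.filter (fun d => μ d = -1),
          ((m : ℝ) / d - ((m / d : ℕ) : ℝ))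
          ≤ ∑ d ∈ n.divisors.filter (fun d => μ d = -1), (1 : ℝ) := by
        refine Finset.sum_le_sum fun d hd => ?_
        exact he1 d (Finset.mem_filter.mp hd).1
      have hval : ∑ d ∈ n.divisors.filter (fun d => μ d = -1), (1 : ℝ)
          = (2 ^ (n.primeFactors.card - 1) : ℝ) := by
        rw [Finset.sum_const, hNc]
        ring
      linarith
    linarith
end
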